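/- Let Z(x,y) = x + i·exp(-1/y) for (x,y) ∈ (-1,1) × (0,1) and f(x,y) = 1/Z(x,y). Then there is a constant C such that ∫_{-1}^{1} |f(x,y)| dx ≤ C/y for all y ∈ (0,1), while |f(0,y)| = exp(1/y). -/
import Mathlib


open Real

/-- For `Z(x,y) = x + i·exp(-1/y)` on `(-1,1) × (0,1)` and `f = 1/Z`,
there is a constant `C` with `∫_{-1}^1 |f(x,y)| dx ≤ C/y` for all `y ∈ (0,1)`,
while `|f(0,y)| = exp(1/y)`. -/
theorem example_one_two
    (Z : ℝ → ℝ → ℂ) (hZ : ∀ x y, Z x y = (x : ℂ) + Complex.I * Real.exp (-(1/y)))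
    (f : ℝ → ℝ → ℂ) (hf : ∀ x y, f x y = 1 / Z x y) :
    (∃ C : ℝ, ∀ y ∈ Set.Ioo (0:ℝ) 1, (∫ x in (-1:ℝ)..1, ‖f x y‖) ≤ C / y) ∧
    (∀ y ∈ Set.Ioo (0:ℝ) 1, ‖f 0 y‖ = Real.exp (1/y)) := by
  constructor
  · refine ⟨8, fun y hy => ?_⟩
    obtain ⟨hy0, hy1⟩ := hy
    obtain ⟨ε, hεdef⟩ : ∃ ε : ℝ, ε = Real.exp (-(1/y)) := ⟨_, rfl⟩
    have hεpos : 0 < ε := hεdef ▸ Real.exp_pos _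
    have h1y : 1 ≤ 1/y := by rw [le_div_iff₀ hy0]; linarith
    have hε1 : ε ≤ 1 := by
      rw [hεdef]
      exact (Real.exp_le_one_iff).2 (by linarith)
    have hZε : ∀ x : ℝ, Z x y = (x:ℂ) + Complex.I * (ε:ℝ) := by
      intro x; rw [hZ, hεdef]
    have hre : ∀ x : ℝ, (Z x y).re = x := by
      intro x; rw [hZε]
      simp only [Complex.add_re, Complex.ofReal_re, Complex.mul_re, Complex.I_re,
        Complex.I_im, Complex.ofReal_im, zero_mul, one_mul, mul_zero, sub_zero, add_zero]
    have him : ∀ x : ℝ, (Z x y).im = ε := by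
      intro x; rw [hZε]
      simp only [Complex.add_im, Complex.ofReal_im, Complex.mul_im, Complex.I_re,
        Complex.I_im, Complex.ofReal_re, zero_mul, one_mul, zero_add, mul_zero, add_zero]
    -- pointwise bound
    have hnorm : ∀ x : ℝ, ‖f x y‖ ≤ 2 / (|x| + ε) := by
      intro x
      have h1 : |x| ≤ ‖Z x y‖ := by
        have h := Complex.abs_re_le_norm (Z x y)
        rwa [hre] at h
      have h2 : ε ≤ ‖Z x y‖ := by
        have h := Complex.abs_im_le_norm (Z x y)
        rw [him] at h
        calc ε ≤ |ε| := le_abs_self ε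
          _ ≤ _ := h
      have hpos : 0 < |x| + ε := by positivity
      have hZn : 0 < ‖Z x y‖ := by
        have := abs_nonneg x; linarith
      rw [hf, norm_div, norm_one, div_le_div_iff₀ hZn hpos]
      linarith
    have hZne : ∀ x : ℝ, ((x:ℂ) + Complex.I * (ε:ℝ)) ≠ 0 := by
      intro x h
      have h2 : ((x:ℂ) + Complex.I * (ε:ℝ)).im = ε := by rw [← hZε, him]
      rw [h] at h2
      simp only [Complex.zero_im] at h2
      exact hεpos.ne h2
    have hcont : Continuous fun x : ℝ => ‖f x y‖ := by
      have hc : Continuous fun x : ℝ => (1:ℂ) / ((x:ℂ) + Complex.I * (ε:ℝ)) :=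
        continuous_const.div (by continuity) hZne
      have heq : (fun x : ℝ => ‖f x y‖)
          = fun x : ℝ => ‖(1:ℂ) / ((x:ℂ) + Complex.I * (ε:ℝ))‖ := by
        funext x; rw [hf, hZε]
      rw [heq]; exact hc.norm
    have hcont2 : Continuous fun x : ℝ => 2 / (|x| + ε) :=
      continuous_const.div (continuous_abs.add continuous_const) (fun x => by positivity)
    have hmono : (∫ x in (-1:ℝ)..1, ‖f x y‖) ≤ ∫ x in (-1:ℝ)..1, 2 / (|x| + ε) :=
      intervalIntegral.integral_mono_on (by norm_num)
        (hcont.intervalIntegrable _ _) (hcont2.intervalIntegrable _ _)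
        (fun x _ => hnorm x)
    -- split by symmetry
    have hleft : (∫ x in (-1:ℝ)..0, 2 / (|x| + ε)) = ∫ x in (0:ℝ)..1, 2 / (|x| + ε) := by
      have h := intervalIntegral.integral_comp_neg (a := (0:ℝ)) (b := 1)
        (fun x => 2 / (|x| + ε))
      simp only [abs_neg, neg_zero] at h
      rw [← h]
    have hsplit : (∫ x in (-1:ℝ)..1, 2 / (|x| + ε))
        = 2 * ∫ x in (0:ℝ)..1, 2 / (|x| + ε) := by
      rw [← intervalIntegral.integral_add_adjacent_intervals
        (a := (-1:ℝ)) (b := 0) (c := 1)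
        (hcont2.intervalIntegrable _ _) (hcont2.intervalIntegrable _ _), hleft]
      ring
    have habs : (∫ x in (0:ℝ)..1, 2 / (|x| + ε)) = ∫ x in (0:ℝ)..1, 2 / (x + ε) := by
      apply intervalIntegral.integral_congr
      intro x hx
      rw [Set.uIcc_of_le (by norm_num : (0:ℝ) ≤ 1)] at hx
      dsimp only
      rw [abs_of_nonneg hx.1]
    have hval : (∫ x in (0:ℝ)..1, 2 / (x + ε)) = 2 * Real.log ((1 + ε) / ε) := by
      have hmem : (0:ℝ) ∉ Set.uIcc ε (1 + ε) := by
        intro hc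
        rw [Set.mem_uIcc] at hc
        rcases hc with ⟨h1, _⟩ | ⟨_, h2⟩ <;> linarith
      have h0 : (∫ x in (0:ℝ)..1, (x + ε)⁻¹) = Real.log ((1 + ε) / ε) := by
        have h := intervalIntegral.integral_comp_add_right (a := (0:ℝ)) (b := 1)
          (fun x : ℝ => x⁻¹) ε
        rw [h, show (0:ℝ)+ε = ε from zero_add ε, integral_inv hmem]
      calc (∫ x in (0:ℝ)..1, 2 / (x + ε)) = 2 * ∫ x in (0:ℝ)..1, (x + ε)⁻¹ := by
            rw [← intervalIntegral.integral_const_mul]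
            simp only [mul_comm, div_eq_mul_inv]
        _ = 2 * Real.log ((1 + ε) / ε) := by rw [h0]
    have hlog : Real.log ((1 + ε) / ε) ≤ 1 + 1/y := by
      rw [Real.log_div (by positivity) hεpos.ne', hεdef, Real.log_exp]
      have hl : Real.log (1 + ε) ≤ ε := by
        have := Real.log_le_sub_one_of_pos (x := 1 + ε) (by positivity)
        linarith
      rw [← hεdef]
      linarith
    have h8 : (8:ℝ) / y = 8 * (1/y) := by ring
    calc (∫ x in (-1:ℝ)..1, ‖f x y‖) ≤ ∫ x in (-1:ℝ)..1, 2 / (|x| + ε) := hmono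
      _ = 2 * ∫ x in (0:ℝ)..1, 2 / (|x| + ε) := hsplit
      _ = 2 * (2 * Real.log ((1 + ε) / ε)) := by rw [habs, hval]
      _ ≤ 4 * (1 + 1/y) := by linarith
      _ ≤ 8 / y := by rw [h8]; linarith
  · intro y hy
    rw [hf, hZ]
    have hεpos : (0:ℝ) < Real.exp (-(1/y)) := Real.exp_pos _
    rw [norm_div, norm_one]
    have h0 : ((0:ℝ):ℂ) + Complex.I * (Real.exp (-(1/y)) : ℝ)
        = Complex.I * (Real.exp (-(1/y)) : ℝ) := by
      simp
    rw [h0, norm_mul, Complex.norm_I, one_mul, Complex.norm_real,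
      Real.norm_eq_abs, abs_of_pos hεpos, Real.exp_neg]
    simp
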